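/- In the digraph H(p,q,d) with d dividing both p and q, the out-neighbors of the vertex corresponding to the interval [di, di+d-1], where i = (t,s) in mixed-radix coordinates with i = t·(q/d)+s, 0≤t<p, 0≤s<q/d, are the d distinct vertices indexed by (q-1-(ds+r))·(p/d) + ⌊(p-1-t)/d⌋ for r = 0,...,d-1; in particular they are pairwise distinct. -/
import Mathlib


/-- The OTIS transpose map: for a = iq+j (0 ≤ i < p, 0 ≤ j < q), tau a = (q-1-j)p + (p-1-i). -/
def tau (p q a : ℕ) : ℕ := (q - 1 - a % q) * p + (p - 1 - a / q)

/-- Arc multiplicity from vertex u to vertex v in H(p,q,d). -/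
def mult (p q d u v : ℕ) : ℕ :=
  ((Finset.range d).filter (fun r => tau p q (d * u + r) / d = v)).card

/-- There is an arc from u to v in H(p,q,d). -/
def arc (p q d u v : ℕ) : Prop := ∃ r < d, tau p q (d * u + r) / d = v

theorem stmt_9 (p q d : ℕ) (hd : 0 < d) (hdp : d ∣ p) (hdq : d ∣ q)
    (t s : ℕ) (ht : t < p) (hs : s < q / d) (i : ℕ) (hi : i = t * (q / d) + s) :
    (∀ r < d, tau p q (d * i + r) / d
        = (q - 1 - (d * s + r)) * (p / d) + (p - 1 - t) / d) ∧
    (∀ r < d, ∀ r' < d,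
        tau p q (d * i + r) / d = tau p q (d * i + r') / d → r = r') := by
  have hq := Nat.mul_div_cancel' hdq
  have hp := Nat.mul_div_cancel' hdp
  have key : ∀ r < d, tau p q (d * i + r) / d
      = (q - 1 - (d * s + r)) * (p / d) + (p - 1 - t) / d := by
    intro r hr
    have h1 : d * (s + 1) ≤ q := by rw [← hq]; exact Nat.mul_le_mul_left d hs
    have h2 : d * (s + 1) = d * s + d := by ring
    have hj : d * s + r < q := by omega
    have hqpos : 0 < q := by omega
    have ha : d * i + r = q * t + (d * s + r) := by
      subst hi; conv_rhs => rw [← hq]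
      ring
    have hmod : (d * i + r) % q = d * s + r := by
      rw [ha, Nat.mul_add_mod, Nat.mod_eq_of_lt hj]
    have hdiv : (d * i + r) / q = t := by
      rw [ha, Nat.mul_add_div hqpos, Nat.div_eq_of_lt hj, Nat.add_zero]
    rw [tau, hmod, hdiv]
    have h3 : (q - 1 - (d * s + r)) * p + (p - 1 - t)
        = d * ((q - 1 - (d * s + r)) * (p / d)) + (p - 1 - t) := by
      nth_rewrite 1 [← hp]
      ring
    rw [h3, Nat.mul_add_div hd]
  refine ⟨key, ?_⟩
  intro r hr r' hr' h
  rw [key r hr, key r' hr'] at h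
  have hp0 : 0 < p / d := Nat.div_pos (Nat.le_of_dvd (by omega) hdp) hd
  have hA : (q - 1 - (d * s + r)) * (p / d) = (q - 1 - (d * s + r')) * (p / d) := by omega
  have hAB : q - 1 - (d * s + r) = q - 1 - (d * s + r') :=
    Nat.eq_of_mul_eq_mul_right hp0 hA
  have h1 : d * (s + 1) ≤ q := by rw [← hq]; exact Nat.mul_le_mul_left d hs
  have h2 : d * (s + 1) = d * s + d := by ring
  omega
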